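/- Let F : mod A → mod B be a t-eventually homological isomorphism which is essentially surjective. Then for every finitely generated A-module X, the injective dimension of F(X) over B is at most the maximum of t and the injective dimension of X over A; moreover, if Y is a finitely generated B-module with F(Y') ≅ Y, then the injective dimension of Y' over A is at most the maximum of t and the injective dimension of Y over B. -/

import Mathlib

open CategoryTheory Opposite Limits

noncomputable section

/-- `Ext^j` over the `k`-algebra `Λ`, as a `k`-module. -/
abbrev extM (k : Type) [Field k] (Λ : Type) [Ring Λ] [Algebra k Λ] (j : ℕ)
    (X Y : ModuleCat.{0} Λ) : ModuleCat k :=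
  ((Ext k (ModuleCat.{0} Λ) j).obj (op X)).obj Y

/-- projective dimension at most `n`, via vanishing of `Ext^j (X, -)` for all `j > n`. -/
def pdLE (k : Type) [Field k] (Λ : Type) [Ring Λ] [Algebra k Λ]
    (X : ModuleCat.{0} Λ) (n : ℕ) : Prop :=
  ∀ (Y : ModuleCat.{0} Λ) (j : ℕ), n < j → Subsingleton (extM k Λ j X Y)

/-- injective dimension at most `n`, via vanishing of `Ext^j (-, Y)` for all `j > n`. -/
def idLE (k : Type) [Field k] (Λ : Type) [Ring Λ] [Algebra k Λ]
    (Y : ModuleCat.{0} Λ) (n : ℕ) : Prop :=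
  ∀ (X : ModuleCat.{0} Λ) (j : ℕ), n < j → Subsingleton (extM k Λ j X Y)

/-- `X ∈ ⊥Λ`, i.e. `Ext^i (X, Λ) = 0` for all `i > 0`. -/
def MemPerp (k : Type) [Field k] (Λ : Type) [Ring Λ] [Algebra k Λ]
    (X : ModuleCat.{0} Λ) : Prop :=
  ∀ j : ℕ, 0 < j → Subsingleton (extM k Λ j X (ModuleCat.of Λ Λ))

/-- `F` is a `t`-eventually homological isomorphism: for all `j > t` there are
isomorphisms `Ext^j_A(X, Y) ≅ Ext^j_B(FX, FY)` for all finitely generated `X`, `Y`. -/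
def IsEHI (k : Type) [Field k] (A B : Type) [Ring A] [Algebra k A] [Ring B] [Algebra k B]
    (F : ModuleCat.{0} A ⥤ ModuleCat.{0} B) (t : ℕ) : Prop :=
  ∀ (X Y : ModuleCat.{0} A), Module.Finite A X → Module.Finite A Y →
    ∀ j : ℕ, t < j → Nonempty (extM k A j X Y ≅ extM k B j (F.obj X) (F.obj Y))

/-- `F` is essentially surjective on finitely generated modules. -/
def EssSurjFG (A B : Type) [Ring A] [Ring B]
    (F : ModuleCat.{0} A ⥤ ModuleCat.{0} B) : Prop :=
  ∀ Y : ModuleCat.{0} B, Module.Finite B Y →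
    ∃ X : ModuleCat.{0} A, Module.Finite A X ∧ Nonempty (F.obj X ≅ Y)

variable (k : Type) [Field k] (Λ : Type) [Ring Λ] [Algebra k Λ]

/-- postcomposition map of hom complexes -/
def lyoMap (P : ChainComplex (ModuleCat.{0} Λ) ℕ) {Y Z : ModuleCat.{0} Λ} (g : Y ⟶ Z) :
    P.linearYonedaObj k Y ⟶ P.linearYonedaObj k Z where
  f n := ModuleCat.ofHom (Linear.rightComp k (P.X n) g)
  comm' i j _ := by
    ext (x : P.X i ⟶ Y)
    change (P.d j i ≫ x) ≫ g = P.d j i ≫ (x ≫ g)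
    simp

lemma lyoMap_apply (P : ChainComplex (ModuleCat.{0} Λ) ℕ) {Y Z : ModuleCat.{0} Λ} (g : Y ⟶ Z)
    (n : ℕ) (x : P.X n ⟶ Y) : (lyoMap k Λ P g).f n x = x ≫ g := rfl

/-- The short complex of hom complexes induced by a short complex of modules. -/
def homSES (P : ChainComplex (ModuleCat.{0} Λ) ℕ) (S : ShortComplex (ModuleCat.{0} Λ)) :
    ShortComplex (CochainComplex (ModuleCat k) ℕ) where
  X₁ := P.linearYonedaObj k S.X₁
  X₂ := P.linearYonedaObj k S.X₂
  X₃ := P.linearYonedaObj k S.X₃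
  f := lyoMap k Λ P S.f
  g := lyoMap k Λ P S.g
  zero := by
    ext n (x : P.X n ⟶ S.X₁)
    change (x ≫ S.f) ≫ S.g = _
    rw [Category.assoc, S.zero, Limits.comp_zero]
    rfl

lemma homSES_shortExact (P : ChainComplex (ModuleCat.{0} Λ) ℕ)
    [∀ n, Projective (P.X n)]
    (S : ShortComplex (ModuleCat.{0} Λ)) (hS : S.ShortExact) :
    (homSES k Λ P S).ShortExact := by
  have := hS.mono_f
  have := hS.epi_g
  apply HomologicalComplex.shortExact_of_degreewise_shortExact
  intro n
  refine { mono_f := ?_, epi_g := ?_, exact := ?_ }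
  case refine_2 =>
    rw [ModuleCat.mono_iff_injective]
    intro (x : P.X n ⟶ S.X₁) (y : P.X n ⟶ S.X₁) hxy
    change x ≫ S.f = y ≫ S.f at hxy
    exact (cancel_mono S.f).1 hxy
  case refine_3 =>
    rw [ModuleCat.epi_iff_surjective]
    intro (x : P.X n ⟶ S.X₃)
    exact ⟨Projective.factorThru x S.g, Projective.factorThru_comp x S.g⟩
  case refine_1 =>
    rw [ShortComplex.moduleCat_exact_iff]
    intro (x : P.X n ⟶ S.X₂) hx
    change x ≫ S.g = 0 at hx
    exact ⟨hS.exact.lift x hx, hS.exact.lift_f x hx⟩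

lemma subsingleton_of_iso {R : Type} [Ring R] {M N : ModuleCat.{0} R} (e : M ≅ N)
    (h : Subsingleton M) : Subsingleton N :=
  Equiv.subsingleton (((forget (ModuleCat R)).mapIso e).toEquiv.symm)

lemma subsingleton_of_isZero {R : Type} [Ring R] {M : ModuleCat.{0} R} (h : IsZero M) :
    Subsingleton M := by
  have e : M ≅ ModuleCat.of R PUnit :=
    h.iso (ModuleCat.isZero_of_subsingleton _)
  exact subsingleton_of_iso e.symm inferInstance

lemma subsingleton_iff_isZero {R : Type} [Ring R] (M : ModuleCat.{0} R) :
    Subsingleton M ↔ IsZero M :=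
  ⟨fun h => ModuleCat.isZero_of_subsingleton M, subsingleton_of_isZero⟩

abbrev extM' (j : ℕ) (X Y : ModuleCat.{0} Λ) : ModuleCat k :=
  ((Ext k (ModuleCat.{0} Λ) j).obj (op X)).obj Y

lemma ext_subsingleton_iff {X : ModuleCat.{0} Λ} (P : ProjectiveResolution X)
    (Y : ModuleCat.{0} Λ) (j : ℕ) :
    Subsingleton (extM' k Λ j X Y) ↔ (P.complex.linearYonedaObj k Y).ExactAt j := by
  rw [subsingleton_iff_isZero, HomologicalComplex.exactAt_iff_isZero_homology]
  constructor
  · intro h; exact h.of_iso (P.isoExt j Y).symm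
  · intro h; exact h.of_iso (P.isoExt j Y)

instance (X : ModuleCat.{0} Λ) : HasProjectiveResolution X := inferInstance

/-- Factor a map killing the kernel through an extension, using injectivity. -/
lemma factor_through_injective {Pn Pm J : ModuleCat.{0} Λ} [Injective J]
    (d : Pm ⟶ Pn) (x : Pm ⟶ J) (hker : LinearMap.ker d.hom ≤ LinearMap.ker x.hom) :
    ∃ g : Pn ⟶ J, d ≫ g = x := by
  have hio : CategoryTheory.Injective (ModuleCat.of Λ J) := ‹Injective J›
  have hinj : Module.Injective Λ J :=
    Module.injective_module_of_injective_object Λ J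
  set dl : Pm →ₗ[Λ] Pn := d.hom
  set xl : Pm →ₗ[Λ] J := x.hom
  let fbar : (Pm ⧸ LinearMap.ker dl) →ₗ[Λ] J := LinearMap.ker dl |>.liftQ xl hker
  let e := LinearMap.quotKerEquivRange dl
  let φ : LinearMap.range dl →ₗ[Λ] J := fbar.comp (e.symm : LinearMap.range dl →ₗ[Λ] _)
  obtain ⟨gext, hgext⟩ := hinj.out (LinearMap.range dl).subtype
    (Submodule.injective_subtype _) φ
  refine ⟨ModuleCat.ofHom gext, ?_⟩
  ext y
  have h1 : gext (dl y) = φ ⟨dl y, LinearMap.mem_range_self dl y⟩ :=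
    hgext ⟨dl y, LinearMap.mem_range_self dl y⟩
  have h2 : e.symm ⟨dl y, LinearMap.mem_range_self dl y⟩ =
      Submodule.Quotient.mk y :=
    LinearMap.quotKerEquivRange_symm_apply_image dl y _
  change gext (dl y) = xl y
  rw [h1]
  show fbar (e.symm ⟨dl y, _⟩) = xl y
  rw [h2]
  rfl

lemma ext_vanish_injective (X J : ModuleCat.{0} Λ) [Injective J] (n : ℕ) :
    Subsingleton (extM' k Λ (n+1) X J) := by
  obtain ⟨P⟩ := (inferInstance : HasProjectiveResolution X).out
  rw [ext_subsingleton_iff k Λ P]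
  rw [HomologicalComplex.exactAt_iff' _ n (n+1) (n+2) (by simp) (by simp)]
  rw [ShortComplex.moduleCat_exact_iff]
  intro (x : P.complex.X (n+1) ⟶ J) hx
  have hx' : P.complex.d (n+2) (n+1) ≫ x = 0 := by
    ext v
    exact congrArg (fun f : P.complex.X (n+2) ⟶ J => f.hom v) (show P.complex.d (n+2) (n+1) ≫ x = 0 from hx)
  have hexact := (P.exact_succ n)
  rw [ShortComplex.moduleCat_exact_iff_range_eq_ker] at hexact
  obtain ⟨g, hg⟩ := factor_through_injective Λ (P.complex.d (n+1) n) x (by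
    intro v hv
    have hv' : v ∈ LinearMap.range (P.complex.d (n+2) (n+1)).hom := by
      rw [hexact]; exact hv
    obtain ⟨w, rfl⟩ := hv'
    have := congrFun (congrArg (fun (f : P.complex.X (n+2) ⟶ J) => (f : _ → _)) hx') w
    simpa using this)
  exact ⟨g, hg⟩

lemma isZero_homology_iff {X : ModuleCat.{0} Λ} (P : ProjectiveResolution X)
    (Y : ModuleCat.{0} Λ) (j : ℕ) :
    IsZero ((P.complex.linearYonedaObj k Y).homology j) ↔ Subsingleton (extM' k Λ j X Y) := by
  rw [ext_subsingleton_iff k Λ P, HomologicalComplex.exactAt_iff_isZero_homology]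

/-- going up: `Ext^j(X, S.X₃) = 0 → Ext^(j+1)(X, S.X₁) = 0` when `S.X₂` is injective. -/
lemma subsingleton_ext_up (S : ShortComplex (ModuleCat.{0} Λ)) (hS : S.ShortExact)
    [Injective S.X₂] (X : ModuleCat.{0} Λ) (j : ℕ)
    (h3 : Subsingleton (extM' k Λ j X S.X₃)) :
    Subsingleton (extM' k Λ (j+1) X S.X₁) := by
  obtain ⟨P⟩ := (inferInstance : HasProjectiveResolution X).out
  set T := homSES k Λ P.complex S with hT_def
  have hT : T.ShortExact := homSES_shortExact k Λ P.complex S hS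
  have hrel : (ComplexShape.up ℕ).Rel j (j+1) := by simp
  have hz2 : IsZero (T.X₂.homology (j+1)) :=
    (isZero_homology_iff k Λ P S.X₂ (j+1)).2 (ext_vanish_injective k Λ X S.X₂ j)
  have hf0 : HomologicalComplex.homologyMap T.f (j+1) = 0 := hz2.eq_of_tgt _ _
  have hepi : Epi (hT.δ j (j+1) hrel) := (hT.homology_exact₁ j (j+1) hrel).epi_f hf0
  have hsurj := (ModuleCat.epi_iff_surjective _).1 hepi
  haveI hs3 : Subsingleton (T.X₃.homology j) :=
    subsingleton_of_isZero ((isZero_homology_iff k Λ P S.X₃ j).2 h3)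
  have : Subsingleton (T.X₁.homology (j+1)) := hsurj.subsingleton
  exact subsingleton_of_iso (P.isoExt (j+1) S.X₁).symm this

/-- going down: `Ext^(j+1)(X, S.X₁) = 0 → Ext^j(X, S.X₃) = 0` when `S.X₂` injective, `j ≥ 1`. -/
lemma subsingleton_ext_down (S : ShortComplex (ModuleCat.{0} Λ)) (hS : S.ShortExact)
    [Injective S.X₂] (X : ModuleCat.{0} Λ) (j : ℕ) (hj : 1 ≤ j)
    (h1 : Subsingleton (extM' k Λ (j+1) X S.X₁)) :
    Subsingleton (extM' k Λ j X S.X₃) := by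
  obtain ⟨P⟩ := (inferInstance : HasProjectiveResolution X).out
  set T := homSES k Λ P.complex S with hT_def
  have hT : T.ShortExact := homSES_shortExact k Λ P.complex S hS
  have hrel : (ComplexShape.up ℕ).Rel j (j+1) := by simp
  obtain ⟨j', rfl⟩ : ∃ j', j = j' + 1 := ⟨j - 1, (Nat.succ_pred_eq_of_pos hj).symm⟩
  have hz2 : IsZero (T.X₂.homology (j'+1)) :=
    (isZero_homology_iff k Λ P S.X₂ (j'+1)).2 (ext_vanish_injective k Λ X S.X₂ j')
  have hg0 : HomologicalComplex.homologyMap T.g (j'+1) = 0 := hz2.eq_of_src _ _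
  have hmono : Mono (hT.δ (j'+1) (j'+1+1) hrel) :=
    (hT.homology_exact₃ (j'+1) (j'+1+1) hrel).mono_g hg0
  have hinj := (ModuleCat.mono_iff_injective _).1 hmono
  have hs1 : Subsingleton (T.X₁.homology (j'+1+1)) :=
    subsingleton_of_isZero ((isZero_homology_iff k Λ P S.X₁ (j'+1+1)).2 h1)
  have : Subsingleton (T.X₃.homology (j'+1)) := ⟨fun a b => hinj (Subsingleton.elim _ _)⟩
  exact subsingleton_of_iso (P.isoExt (j'+1) S.X₃).symm this

/-- the canonical short exact sequence `0 → Z → I(Z) → cosyz Z → 0`. -/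
def sesCosyz (Z : ModuleCat.{0} Λ) : ShortComplex (ModuleCat.{0} Λ) :=
  ShortComplex.mk (Injective.ι Z) (cokernel.π (Injective.ι Z)) (cokernel.condition _)

lemma sesCosyz_shortExact (Z : ModuleCat.{0} Λ) : (sesCosyz Λ Z).ShortExact where
  exact := ShortComplex.exact_of_g_is_cokernel _ (cokernelIsCokernel _)
  mono_f := by dsimp [sesCosyz]; infer_instance
  epi_g := by dsimp [sesCosyz]; infer_instance

instance (Z : ModuleCat.{0} Λ) : Injective ((sesCosyz Λ Z).X₂) := by
  dsimp [sesCosyz]; infer_instance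

/-- cosyzygy -/
def cosyz (Z : ModuleCat.{0} Λ) : ModuleCat.{0} Λ := (sesCosyz Λ Z).X₃

/-- iterated cosyzygies, peeling inside -/
def cosyzN : ℕ → ModuleCat.{0} Λ → ModuleCat.{0} Λ
  | 0, Z => Z
  | (i+1), Z => cosyzN i (cosyz Λ Z)

/-- climbing up the cosyzygy tower -/
lemma up_chain : ∀ (i : ℕ) (Z : ModuleCat.{0} Λ), Injective (cosyzN Λ i Z) →
    ∀ (X : ModuleCat.{0} Λ) (j : ℕ), i < j → Subsingleton (extM' k Λ j X Z)
  | 0, Z, hZ, X, j, hj => by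
    obtain ⟨n, rfl⟩ : ∃ n, j = n + 1 := ⟨j - 1, (Nat.succ_pred_eq_of_pos hj).symm⟩
    haveI : Injective Z := hZ
    exact ext_vanish_injective k Λ X Z n
  | (i+1), Z, hZ, X, j, hj => by
    obtain ⟨j', rfl⟩ : ∃ n, j = n + 1 := ⟨j - 1, (Nat.succ_pred_eq_of_pos (Nat.lt_of_le_of_lt (Nat.zero_le _) hj)).symm⟩
    have h3 : Subsingleton (extM' k Λ j' X (cosyz Λ Z)) :=
      up_chain i (cosyz Λ Z) hZ X j' (Nat.lt_of_succ_lt_succ hj)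
    exact subsingleton_ext_up k Λ (sesCosyz Λ Z) (sesCosyz_shortExact Λ Z) X j' h3

/-- going down the cosyzygy tower, for a fixed first argument `X`. -/
lemma down_chain (X : ModuleCat.{0} Λ) : ∀ (i : ℕ) (Z : ModuleCat.{0} Λ) (m : ℕ),
    (∀ j : ℕ, 1 ≤ j → m ≤ j → Subsingleton (extM' k Λ j X Z)) →
    ∀ j : ℕ, 1 ≤ j → m - i ≤ j → Subsingleton (extM' k Λ j X (cosyzN Λ i Z))
  | 0, Z, m, h, j, hj, hmj => h j hj (by omega)
  | (i+1), Z, m, h, j, hj, hmj => by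
    refine down_chain X i (cosyz Λ Z) (m - 1) ?_ j hj (by omega)
    intro j' hj' hmj'
    exact subsingleton_ext_down k Λ (sesCosyz Λ Z) (sesCosyz_shortExact Λ Z) X j' hj'
      (h (j'+1) (by omega) (by omega))

/-- abstract Baer-extension construction. -/
lemma baer_extend {A0 Q' : Type} [AddCommGroup A0] [Module Λ A0] [AddCommGroup Q'] [Module Λ Q']
    (I : Ideal Λ) (f : ↥I →ₗ[Λ] Q') (πM : A0 →ₗ[Λ] (Λ ⧸ I)) (hπ : Function.Surjective πM)
    (α : A0 →ₗ[Λ] Λ) (hαq : ∀ u, I.mkQ (α u) = πM u) (g : A0 →ₗ[Λ] Q')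
    (hagree : ∀ u : A0, πM u = 0 → ∀ hu : α u ∈ I, g u = f ⟨α u, hu⟩) :
    ∃ h : Λ →ₗ[Λ] Q', ∀ (x : Λ) (hx : x ∈ I), h x = f ⟨x, hx⟩ := by
  set ψ : (A0 × Λ) →ₗ[Λ] (Λ ⧸ I) :=
    πM.comp (LinearMap.fst Λ A0 Λ) - I.mkQ.comp (LinearMap.snd Λ A0 Λ) with hψdef
  have hψ_apply : ∀ z : A0 × Λ, ψ z = πM z.1 - I.mkQ z.2 := fun z => rfl
  set T := LinearMap.ker ψ with hTdef
  have hTmem : ∀ z : A0 × Λ, z ∈ T ↔ πM z.1 - I.mkQ z.2 = 0 := by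
    intro z
    rw [hTdef, LinearMap.mem_ker, hψ_apply]
  have hmem2 : ∀ z : A0 × Λ, z ∈ T → α z.1 - z.2 ∈ I := by
    intro z hz
    rw [hTmem] at hz
    have : I.mkQ (α z.1 - z.2) = 0 := by
      rw [map_sub, hαq]
      exact hz
    rw [Submodule.mkQ_apply] at this
    exact (Submodule.Quotient.mk_eq_zero I).1 this
  set β : T →ₗ[Λ] ↥I :=
    LinearMap.codRestrict I
      (((α.comp (LinearMap.fst Λ A0 Λ)) - (LinearMap.snd Λ A0 Λ)).comp T.subtype)
      (fun z => hmem2 _ z.2) with hβdef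
  set Ψ : T →ₗ[Λ] Q' :=
    (g.comp ((LinearMap.fst Λ A0 Λ).comp T.subtype)) - f.comp β with hΨdef
  have hΨ_apply : ∀ (z : T) (B : ↥I), (B : Λ) = α (z : A0 × Λ).1 - (z : A0 × Λ).2 →
      Ψ z = g (z : A0 × Λ).1 - f B := by
    intro z B hB
    have h1 : β z = B := Subtype.ext (by rw [hB]; rfl)
    show g (z : A0 × Λ).1 - f (β z) = g (z : A0 × Λ).1 - f B
    rw [h1]
  set p2 : T →ₗ[Λ] Λ := (LinearMap.snd Λ A0 Λ).comp T.subtype with hp2def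
  have hp2_apply : ∀ z : T, p2 z = (z : A0 × Λ).2 := fun z => rfl
  have hp2 : Function.Surjective p2 := by
    intro l
    obtain ⟨u, hu⟩ := hπ (I.mkQ l)
    exact ⟨⟨(u, l), by rw [hTmem, hu, sub_self]⟩, rfl⟩
  have hker : LinearMap.ker p2 ≤ LinearMap.ker Ψ := by
    rintro ⟨⟨u, l⟩, hz⟩ hpz
    rw [LinearMap.mem_ker, hp2_apply] at hpz
    change l = 0 at hpz
    subst hpz
    have hπu : πM u = 0 := by
      have := (hTmem (u, 0)).1 hz
      simpa using this
    have hu' : α u ∈ I := by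
      have := hmem2 (u, 0) hz
      simpa using this
    rw [LinearMap.mem_ker,
      hΨ_apply ⟨(u, 0), hz⟩ ⟨α u, hu'⟩ (by simp)]
    rw [← hagree u hπu hu', sub_self]
  set e2 := LinearMap.quotKerEquivOfSurjective p2 hp2 with he2
  refine ⟨((LinearMap.ker p2).liftQ Ψ hker).comp
    (e2.symm : Λ →ₗ[Λ] (T ⧸ LinearMap.ker p2)), ?_⟩
  intro x hx
  have hTx : ((0 : A0), x) ∈ T := by
    rw [hTmem]
    show πM 0 - I.mkQ x = 0
    rw [map_zero, zero_sub, neg_eq_zero, Submodule.mkQ_apply]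
    exact (Submodule.Quotient.mk_eq_zero I).2 hx
  set t : T := ⟨((0 : A0), x), hTx⟩ with ht
  have he2t : e2 (Submodule.Quotient.mk t) = x := by
    simp [he2, LinearMap.quotKerEquivOfSurjective, LinearMap.quotKerEquivRange, hp2_apply]
    rfl
  have hsymm : e2.symm x = Submodule.Quotient.mk t := by
    rw [LinearEquiv.symm_apply_eq, he2t]
  show ((LinearMap.ker p2).liftQ Ψ hker) (e2.symm x) = f ⟨x, hx⟩
  rw [hsymm, Submodule.liftQ_apply,
    hΨ_apply t (-⟨x, hx⟩) (by simp [ht])]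
  show g (0 : A0) - f (-⟨x, hx⟩) = f ⟨x, hx⟩
  rw [map_zero, map_neg, sub_neg_eq_add, zero_add]

lemma injective_of_ext1_vanish (Q : ModuleCat.{0} Λ)
    (h : ∀ X : ModuleCat.{0} Λ, Module.Finite Λ X → Subsingleton (extM' k Λ 1 X Q)) :
    Injective Q := by
  have hQ : Module.Baer Λ Q := by
    intro I f
    set M : ModuleCat.{0} Λ := ModuleCat.of Λ (Λ ⧸ I) with hM
    haveI hfin : Module.Finite Λ (Λ ⧸ I) := inferInstance
    obtain ⟨P⟩ := (inferInstance : HasProjectiveResolution M).out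
    set q : ModuleCat.of Λ Λ ⟶ M := ModuleCat.ofHom I.mkQ with hq_def
    haveI hq : Epi q := (ModuleCat.epi_iff_surjective q).2 (Submodule.mkQ_surjective I)
    set πM : P.complex.X 0 ⟶ M := P.π.f 0 with hπM
    have hπMepi : Epi πM := inferInstanceAs (Epi (P.π.f 0))
    set α : P.complex.X 0 ⟶ ModuleCat.of Λ Λ := Projective.factorThru πM q with hα
    have hαq : α ≫ q = πM := Projective.factorThru_comp _ _
    have hαq_apply : ∀ u, I.mkQ (α u) = πM u := by
      intro u
      exact congrFun (congrArg (fun (φ : P.complex.X 0 ⟶ M) => (φ : _ → _)) hαq) u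
    have hd0 : P.complex.d 1 0 ≫ πM = 0 := P.complex_d_comp_π_f_zero
    have hd0_apply : ∀ v, πM (P.complex.d 1 0 v) = 0 := by
      intro v
      exact congrFun (congrArg (fun (φ : P.complex.X 1 ⟶ M) => (φ : _ → _)) hd0) v
    have hmem : ∀ v : P.complex.X 1, α (P.complex.d 1 0 v) ∈ I := by
      intro v
      have h1 : I.mkQ (α (P.complex.d 1 0 v)) = 0 := by
        rw [hαq_apply, hd0_apply]
      rw [Submodule.mkQ_apply] at h1
      exact (Submodule.Quotient.mk_eq_zero I).1 h1
    -- the 1-cocycle c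
    set c : P.complex.X 1 ⟶ Q :=
      ModuleCat.ofHom (LinearMap.comp f (LinearMap.codRestrict I
        (LinearMap.comp α.hom
          (P.complex.d 1 0).hom) hmem)) with hc
    have hc_apply : ∀ (v) (B : ↥I), (B : Λ) = α (P.complex.d 1 0 v) → c v = f B := by
      intro v B hB
      show f (LinearMap.codRestrict I _ hmem v) = f B
      congr 1
      exact Subtype.ext (by rw [hB]; rfl)
    have hcocycle : P.complex.d 2 1 ≫ c = 0 := by
      ext v
      have hdd : P.complex.d 1 0 (P.complex.d 2 1 v) = 0 :=
        congrFun (congrArg (fun (φ : P.complex.X 2 ⟶ P.complex.X 0) => (φ : _ → _))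
          (P.complex.d_comp_d 2 1 0)) v
      show c (P.complex.d 2 1 v) = 0
      rw [hc_apply (P.complex.d 2 1 v) 0 (by rw [hdd, map_zero]; rfl), map_zero]
    -- kill the cocycle using Ext^1(M, Q) = 0
    have hext : Subsingleton (extM' k Λ 1 M Q) := h M hfin
    rw [ext_subsingleton_iff k Λ P,
      HomologicalComplex.exactAt_iff' _ 0 1 2 (by simp) (by simp),
      ShortComplex.moduleCat_exact_iff] at hext
    obtain ⟨g, hg⟩ := hext c (by
      show ((P.complex.linearYonedaObj k Q).d 1 2) c = 0
      have : ((P.complex.linearYonedaObj k Q).d 1 2) c = P.complex.d 2 1 ≫ c := rfl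
      rw [this, hcocycle]
      rfl)
    set g' : P.complex.X 0 ⟶ Q := (g : P.complex.X 0 ⟶ Q) with hg'def
    have hgc : P.complex.d 1 0 ≫ g' = c := hg
    have hgc_apply : ∀ w, g' (P.complex.d 1 0 w) = c w := by
      intro w
      exact congrFun (congrArg (fun (φ : P.complex.X 1 ⟶ Q) => (φ : _ → _)) hgc) w
    -- exactness at 0
    have hexact0 := P.exact₀
    rw [ShortComplex.moduleCat_exact_iff] at hexact0
    -- apply the abstract extension lemma
    obtain ⟨hbar, hhbar⟩ := baer_extend Λ (A0 := P.complex.X 0) (Q' := Q) I f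
      πM.hom
      ((ModuleCat.epi_iff_surjective πM).1 hπMepi)
      α.hom hαq_apply
      g'.hom
      (by
        intro u hu hau
        obtain ⟨w, hw⟩ := hexact0 u hu
        have hw' : P.complex.d 1 0 w = u := hw
        have h1 : g' u = c w := by rw [← hw']; exact hgc_apply w
        rw [h1]
        exact hc_apply w ⟨α u, hau⟩ (by rw [hw']))
    exact ⟨hbar, fun x hx => hhbar x hx⟩
  rw [show Q = ModuleCat.of Λ Q from rfl, ← Module.injective_iff_injective_object]
  exact Module.Baer.injective hQ

lemma lemmaL (Y : ModuleCat.{0} Λ) (m : ℕ)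
    (h : ∀ X : ModuleCat.{0} Λ, Module.Finite Λ X → ∀ j, m < j → Subsingleton (extM' k Λ j X Y)) :
    ∀ (X : ModuleCat.{0} Λ) (j : ℕ), m < j → Subsingleton (extM' k Λ j X Y) := by
  have hC : Injective (cosyzN Λ m Y) := by
    apply injective_of_ext1_vanish k Λ
    intro X hX
    exact down_chain k Λ X m Y (m+1) (fun j h1 hmj => h X hX j (by omega)) 1 le_rfl (by omega)
  intro X j hj
  exact up_chain k Λ m Y hC X j hj

def ext_iso_fst {W W' Y : ModuleCat.{0} Λ} (e : W ≅ W') (j : ℕ) :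
    extM' k Λ j W Y ≅ extM' k Λ j W' Y :=
  ((Ext k (ModuleCat.{0} Λ) j).mapIso e.op.symm).app Y

def ext_iso_snd {X Y Y' : ModuleCat.{0} Λ} (e : Y ≅ Y') (j : ℕ) :
    extM' k Λ j X Y ≅ extM' k Λ j X Y' :=
  ((Ext k (ModuleCat.{0} Λ) j).obj (op X)).mapIso e


/-- If `F : mod A → mod B` is a `t`-eventually homological isomorphism
which is essentially surjective, then `id_B F(X) ≤ max t (id_A X)` for every finitely
generated `A`-module `X`, and if `Y ∈ mod B` with `F(Y') ≅ Y` then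
`id_A Y' ≤ max t (id_B Y)`. -/
theorem id_le_of_ehi (k : Type) [Field k] (A B : Type) [Ring A] [Algebra k A] [FiniteDimensional k A]
    [Ring B] [Algebra k B] [FiniteDimensional k B]
    (F : ModuleCat.{0} A ⥤ ModuleCat.{0} B) (t : ℕ)
    (hEHI : IsEHI k A B F t) (hSurj : EssSurjFG A B F) :
    (∀ (X : ModuleCat.{0} A), Module.Finite A X →
      ∀ n : ℕ, idLE k A X n → idLE k B (F.obj X) (max t n)) ∧
    (∀ (Y : ModuleCat.{0} B) (Y' : ModuleCat.{0} A), Module.Finite B Y →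
      Module.Finite A Y' → Nonempty (F.obj Y' ≅ Y) →
      ∀ n : ℕ, idLE k B Y n → idLE k A Y' (max t n)) := by
  constructor
  · intro X hX n hid
    intro W j hj
    refine lemmaL k B (F.obj X) (max t n) ?_ W j hj
    intro W' hW' j' hj'
    obtain ⟨X', hX', ⟨e⟩⟩ := hSurj W' hW'
    obtain ⟨e2⟩ := hEHI X' X hX' hX j' (lt_of_le_of_lt (le_max_left t n) hj')
    have h1 : Subsingleton (extM k A j' X' X) := hid X' j' (lt_of_le_of_lt (le_max_right t n) hj')
    have h2 : Subsingleton (extM k B j' (F.obj X') (F.obj X)) := subsingleton_of_iso e2 h1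
    exact subsingleton_of_iso (ext_iso_fst k B e j') h2
  · intro Y Y' hY hY' he n hid
    obtain ⟨e⟩ := he
    intro W j hj
    refine lemmaL k A Y' (max t n) ?_ W j hj
    intro X' hX' j' hj'
    have h1 : Subsingleton (extM k B j' (F.obj X') Y) :=
      hid (F.obj X') j' (lt_of_le_of_lt (le_max_right t n) hj')
    have h2 : Subsingleton (extM k B j' (F.obj X') (F.obj Y')) :=
      subsingleton_of_iso (ext_iso_snd k B e.symm j') h1
    obtain ⟨e2⟩ := hEHI X' Y' hX' hY' j' (lt_of_le_of_lt (le_max_left t n) hj')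
    exact subsingleton_of_iso e2.symm h2
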